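/- Let k<n, let P1,…,Pn be pairwise distinct columns of the semigeneric directed graph 𝕊, and let y1∈P1,…,yk∈Pk. Let ε_i^j∈{0,1} be given for all pairs 1≤i<j≤n with j>k. Then there exist y_{k+1}∈P_{k+1},…,y_n∈P_n such that for all i<j with j>k: y_i→y_j holds if and only if ε_i^j=1. -/

import Mathlib

/-- `x ⊥ y`: there is no edge between `x` and `y`. -/
def Perp {V : Type*} (E : V → V → Prop) (x y : V) : Prop := ¬ E x y ∧ ¬ E y x

/-- A directed graph: an irreflexive relation such that `x → y` and `y → x` never both hold. -/
def IsDigraph {V : Type*} (E : V → V → Prop) : Prop :=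
  (∀ x, ¬ E x x) ∧ ∀ x y, E x y → ¬ E y x

open Classical in
/-- The parity condition: for `x1 ≠ x2` in a common column and `y1 ≠ y2` in a common
column, the number of pairs `(i,j)` with `x_i → y_j` is even. -/
def ParityCond {V : Type*} (E : V → V → Prop) : Prop :=
  ∀ x1 x2 y1 y2 : V, x1 ≠ x2 → y1 ≠ y2 → Perp E x1 x2 → Perp E y1 y2 →
    Even ((if E x1 y1 then 1 else 0) + (if E x1 y2 then 1 else 0) +
      (if E x2 y1 then 1 else 0) + (if E x2 y2 then 1 else 0))

/-- Membership in the class `𝒮`: a digraph in which `⊥` is an equivalence relation and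
the parity condition holds. -/
def InClassS {V : Type*} (E : V → V → Prop) : Prop :=
  IsDigraph E ∧ Equivalence (Perp E) ∧ ParityCond E

/-- `(S, E)` is (a copy of) the semigeneric directed graph: a countably infinite directed
graph, ultrahomogeneous, whose age is exactly the class `𝒮`. (Since the defining conditions
of `𝒮` are preserved under taking induced substructures, the inclusion of the age in `𝒮`
amounts to `(S, E)` itself satisfying them.) -/
structure IsSemigeneric (S : Type*) (E : S → S → Prop) : Prop where
  countable : Countable S
  infinite : Infinite S
  inS : InClassS E
  ultrahomogeneous : ∀ (F : Finset S) (f : S → S), Set.InjOn f ↑F →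
    (∀ a ∈ F, ∀ b ∈ F, (E (f a) (f b) ↔ E a b)) →
    ∃ g : Equiv.Perm S, (∀ x y, E (g x) (g y) ↔ E x y) ∧ ∀ a ∈ F, g a = f a
  rich : ∀ (A : Type) (_ : Finite A) (EA : A → A → Prop), InClassS EA →
    ∃ f : A → S, Function.Injective f ∧ ∀ a b, E (f a) (f b) ↔ EA a b

/-- `g` is an automorphism of the digraph `(S, E)`. -/
def IsAut {S : Type*} (E : S → S → Prop) (g : Equiv.Perm S) : Prop :=
  ∀ x y, E (g x) (g y) ↔ E x y

section Aux
open Classical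

variable {S : Type*}

noncomputable def eW (E : S → S → Prop) {n : ℕ} (w : Fin n → S) (i j : Fin n) : Bool :=
  if E (w i) (w j) then true else false

noncomputable def cB (E : S → S → Prop) {n : ℕ} (w : Fin n → S) (ε : Fin n → Fin n → Bool)
    (j m : Fin n) : Bool :=
  if (m : ℕ) < (j : ℕ) then xor (eW E w m j) (ε m j) else false

def colA {n : ℕ} : Fin n ⊕ Fin n → Fin n
  | .inl i => i
  | .inr i => i

noncomputable def ccB (E : S → S → Prop) {n : ℕ} (w : Fin n → S) (ε : Fin n → Fin n → Bool) :
    Fin n ⊕ Fin n → Fin n → Bool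
  | .inl _, _ => false
  | .inr j, m => cB E w ε j m

noncomputable def eA (E : S → S → Prop) {n : ℕ} (w : Fin n → S) (ε : Fin n → Fin n → Bool)
    (x u : Fin n ⊕ Fin n) : Bool :=
  xor (xor (eW E w (colA x) (colA u)) (ccB E w ε x (colA u))) (ccB E w ε u (colA x))

def EA (E : S → S → Prop) {n : ℕ} (w : Fin n → S) (ε : Fin n → Fin n → Bool)
    (x u : Fin n ⊕ Fin n) : Prop :=
  colA x ≠ colA u ∧ eA E w ε x u = true

variable {E : S → S → Prop} {n : ℕ} {w : Fin n → S} {ε : Fin n → Fin n → Bool}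

theorem eW_true_iff (i j : Fin n) : eW E w i j = true ↔ E (w i) (w j) := by
  unfold eW; by_cases h : E (w i) (w j) <;> simp [h]

theorem eW_antisym (hdi : IsDigraph E) (hne : ∀ i j : Fin n, i ≠ j → ¬ Perp E (w i) (w j))
    {i j : Fin n} (hij : i ≠ j) : eW E w j i = !(eW E w i j) := by
  by_cases h : E (w i) (w j)
  · have h2 : ¬ E (w j) (w i) := hdi.2 _ _ h
    simp [eW, h, h2]
  · have h2 : E (w j) (w i) := by
      by_contra h3
      exact hne i j hij ⟨h, h3⟩
    simp [eW, h, h2]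

theorem eA_antisym (hdi : IsDigraph E) (hne : ∀ i j : Fin n, i ≠ j → ¬ Perp E (w i) (w j))
    {x u : Fin n ⊕ Fin n} (hxu : colA x ≠ colA u) :
    eA E w ε u x = !(eA E w ε x u) := by
  unfold eA
  rw [eW_antisym hdi hne hxu]
  generalize eW E w (colA x) (colA u) = a
  generalize ccB E w ε x (colA u) = b
  generalize ccB E w ε u (colA x) = c
  cases a <;> cases b <;> cases c <;> rfl

theorem perp_EA_iff (hdi : IsDigraph E) (hne : ∀ i j : Fin n, i ≠ j → ¬ Perp E (w i) (w j))
    (x u : Fin n ⊕ Fin n) : Perp (EA E w ε) x u ↔ colA x = colA u := by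
  constructor
  · intro hperp
    by_contra hc
    rcases hperp with ⟨h1, h2⟩
    cases h : eA E w ε x u
    · exact h2 ⟨fun he => hc he.symm, by rw [eA_antisym hdi hne hc, h]; rfl⟩
    · exact h1 ⟨hc, h⟩
  · intro h
    exact ⟨fun he => he.1 h, fun he => he.1 h.symm⟩

theorem inClassS_EA (hdi : IsDigraph E) (hne : ∀ i j : Fin n, i ≠ j → ¬ Perp E (w i) (w j)) :
    InClassS (EA E w ε) := by
  have hiff := perp_EA_iff (E := E) (w := w) (ε := ε) hdi hne
  refine ⟨⟨fun x hx => hx.1 rfl, fun x u hxu hux => ?_⟩, ?_, ?_⟩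
  · have := eA_antisym (E := E) (w := w) (ε := ε) hdi hne hxu.1
    rw [hux.2] at this
    rw [hxu.2] at this
    exact absurd this (by simp)
  · exact ⟨fun x => (hiff x x).2 rfl,
      fun h => (hiff _ _).2 ((hiff _ _).1 h).symm,
      fun h1 h2 => (hiff _ _).2 (((hiff _ _).1 h1).trans ((hiff _ _).1 h2))⟩
  · intro x1 x2 u1 u2 hx hu hpx hpu
    have hcx : colA x1 = colA x2 := (hiff _ _).1 hpx
    have hcu : colA u1 = colA u2 := (hiff _ _).1 hpu
    by_cases hcd : colA x1 = colA u1
    · have h11 : ¬ EA E w ε x1 u1 := fun h => h.1 hcd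
      have h12 : ¬ EA E w ε x1 u2 := fun h => h.1 (hcd.trans hcu)
      have h21 : ¬ EA E w ε x2 u1 := fun h => h.1 (hcx.symm.trans hcd)
      have h22 : ¬ EA E w ε x2 u2 := fun h => h.1 ((hcx.symm.trans hcd).trans hcu)
      simp [h11, h12, h21, h22]
    · have key : ∀ (a b : Fin n ⊕ Fin n), colA a = colA x1 → colA b = colA u1 →
          (if EA E w ε a b then (1:ℕ) else 0) = (if eA E w ε a b = true then 1 else 0) := by
        intro a b ha hb
        have hab : colA a ≠ colA b := fun h => hcd ((ha.symm.trans h).trans hb)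
        by_cases h : eA E w ε a b = true
        · rw [if_pos ⟨hab, h⟩, if_pos h]
        · rw [if_neg (fun he => h he.2), if_neg h]
      rw [key x1 u1 rfl rfl, key x1 u2 rfl hcu.symm, key x2 u1 hcx.symm rfl,
        key x2 u2 hcx.symm hcu.symm]
      have helper : ∀ X a1 a2 b1 b2 : Bool,
          Even ((if (xor (xor X a1) b1) = true then (1:ℕ) else 0) +
            (if (xor (xor X a1) b2) = true then 1 else 0) +
            (if (xor (xor X a2) b1) = true then 1 else 0) +
            (if (xor (xor X a2) b2) = true then 1 else 0)) := by decide
      have := helper (eW E w (colA x1) (colA u1)) (ccB E w ε x1 (colA u1))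
        (ccB E w ε x2 (colA u1)) (ccB E w ε u1 (colA x1)) (ccB E w ε u2 (colA x1))
      simpa [eA, hcx, hcu] using this

theorem EA_inl_inl (hdi : IsDigraph E) (i j : Fin n) :
    EA E w ε (Sum.inl i) (Sum.inl j) ↔ E (w i) (w j) := by
  constructor
  · intro ⟨hc, he⟩
    rw [← eW_true_iff (E := E) (w := w) i j]
    simpa [eA, ccB, colA] using he
  · intro h
    have hij : i ≠ j := fun he => hdi.1 (w i) (he ▸ h)
    exact ⟨by simpa [colA] using hij, by simpa [eA, ccB, colA] using (eW_true_iff i j).2 h⟩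

theorem eA_inl_inr (i j : Fin n) (hij : (i : ℕ) < (j : ℕ)) :
    eA E w ε (Sum.inl i) (Sum.inr j) = ε i j := by
  simp only [eA, ccB, colA, cB, if_pos hij]
  generalize eW E w i j = a
  generalize ε i j = b
  cases a <;> cases b <;> simp [hij]

theorem eA_inr_inr (i j : Fin n) (hij : (i : ℕ) < (j : ℕ)) :
    eA E w ε (Sum.inr i) (Sum.inr j) = ε i j := by
  have hji : ¬ (j : ℕ) < (i : ℕ) := Nat.not_lt.2 hij.le
  simp only [eA, ccB, colA, cB, if_pos hij, if_neg hji]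
  generalize eW E w i j = a
  generalize ε i j = b
  cases a <;> cases b <;> simp [hij, hji]

end Aux

/-- Lemma on realizing prescribed edge patterns. Let `P_1, …, P_n` be pairwise
distinct columns of the semigeneric digraph (represented by points `p 1, …, p n`, with
distinctness of columns expressed by `¬ (p i ⊥ p j)` for `i ≠ j`), let `y_1 ∈ P_1, …,
y_k ∈ P_k` be given, and let `ε_i^j ∈ {0,1}` be given for `1 ≤ i < j ≤ n` with `j > k`.
Then there are `y_{k+1} ∈ P_{k+1}, …, y_n ∈ P_n` such that for all `i < j` with `j > k`,
`y_i → y_j` iff `ε_i^j = 1`. -/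
theorem exists_points_with_prescribed_edges {S : Type*} (E : S → S → Prop)
    (hS : IsSemigeneric S E) (k n : ℕ) (hkn : k < n)
    (p : Fin n → S) (hp : ∀ i j : Fin n, i ≠ j → ¬ Perp E (p i) (p j))
    (y : Fin k → S) (hy : ∀ i : Fin k, Perp E (y i) (p (Fin.castLE hkn.le i)))
    (ε : Fin n → Fin n → Bool) :
    ∃ z : Fin n → S,
      (∀ i : Fin k, z (Fin.castLE hkn.le i) = y i) ∧
      (∀ j : Fin n, Perp E (z j) (p j)) ∧
      (∀ i j : Fin n, i < j → k ≤ (j : ℕ) →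
        (E (z i) (z j) ↔ ε i j = true)) := by
  classical
  obtain ⟨hdi, hperp, -⟩ := hS.inS
  -- the representative of column i
  set w : Fin n → S := fun i => if h : (i : ℕ) < k then y ⟨i, h⟩ else p i with hw
  have hwp : ∀ i, Perp E (w i) (p i) := by
    intro i
    by_cases h : (i : ℕ) < k
    · simpa [hw, h] using hy ⟨i, h⟩
    · simpa [hw, h] using hperp.refl (p i)
  have hne : ∀ i j : Fin n, i ≠ j → ¬ Perp E (w i) (w j) := by
    intro i j hij hpw
    exact hp i j hij (hperp.trans (hperp.symm (hwp i)) (hperp.trans hpw (hwp j)))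
  have hwinj : Function.Injective w := by
    intro i j hij
    by_contra hc
    exact hne i j hc (hij ▸ hperp.refl (w i))
  obtain ⟨f, hfinj, hf⟩ := hS.rich (Fin n ⊕ Fin n) inferInstance (EA E w ε)
    (inClassS_EA hdi hne)
  set F : Finset S := Finset.image (fun i : Fin n => f (Sum.inl i)) Finset.univ with hF
  set φ : S → S := fun s =>
    if h : ∃ i : Fin n, f (Sum.inl i) = s then w (Classical.choose h) else s with hφdef
  have hφ : ∀ i : Fin n, φ (f (Sum.inl i)) = w i := by
    intro i
    have h : ∃ i' : Fin n, f (Sum.inl i') = f (Sum.inl i) := ⟨i, rfl⟩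
    rw [hφdef]
    simp only [dif_pos h]
    congr 1
    have := Classical.choose_spec h
    exact Sum.inl.inj (hfinj this)
  have hmem : ∀ i : Fin n, f (Sum.inl i) ∈ F := by
    intro i; rw [hF]; exact Finset.mem_image_of_mem _ (Finset.mem_univ i)
  have hinjOn : Set.InjOn φ ↑F := by
    intro a ha b hb hab
    rw [hF] at ha hb
    simp only [Finset.coe_image, Set.mem_image] at ha hb
    obtain ⟨i, -, rfl⟩ := ha
    obtain ⟨j, -, rfl⟩ := hb
    rw [hφ, hφ] at hab
    rw [hwinj hab]
  have hedge : ∀ a ∈ F, ∀ b ∈ F, (E (φ a) (φ b) ↔ E a b) := by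
    intro a ha b hb
    rw [hF] at ha hb
    simp only [Finset.mem_image, Finset.mem_univ, true_and] at ha hb
    obtain ⟨i, rfl⟩ := ha
    obtain ⟨j, rfl⟩ := hb
    rw [hφ, hφ, hf]
    exact (EA_inl_inl hdi i j).symm
  obtain ⟨g, hg, hgf⟩ := hS.ultrahomogeneous F φ hinjOn hedge
  have hgw : ∀ i : Fin n, g (f (Sum.inl i)) = w i := fun i =>
    (hgf _ (hmem i)).trans (hφ i)
  have hgperp : ∀ x u : S, Perp E (g x) (g u) ↔ Perp E x u := by
    intro x u; unfold Perp; rw [hg, hg]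
  have hfperp : ∀ a b, Perp E (f a) (f b) ↔ Perp (EA E w ε) a b := by
    intro a b; unfold Perp; rw [hf, hf]
  refine ⟨fun j => if h : (j : ℕ) < k then y ⟨j, h⟩ else g (f (Sum.inr j)), ?_, ?_, ?_⟩
  · intro i
    have h : ((Fin.castLE hkn.le i : Fin n) : ℕ) < k := i.2
    simp only [dif_pos h]
    congr 1
  · intro j
    by_cases h : (j : ℕ) < k
    · simp only [dif_pos h]
      exact hy ⟨j, h⟩
    · simp only [dif_neg h]
      have hpj : p j = w j := by simp [hw, h]
      rw [hpj, ← hgw j, hgperp, hfperp]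
      exact (perp_EA_iff hdi hne _ _).2 rfl
  · intro i j hij hkj
    have hij' : (i : ℕ) < (j : ℕ) := hij
    have hj : ¬ (j : ℕ) < k := Nat.not_lt.2 hkj
    have hcol : (Sum.inl i : Fin n ⊕ Fin n) ≠ Sum.inl j := by
      intro h; exact absurd (Sum.inl.inj h) (Fin.ne_of_lt hij)
    simp only [dif_neg hj]
    by_cases hi : (i : ℕ) < k
    · simp only [dif_pos hi]
      have hwi : y ⟨i, hi⟩ = w i := by simp [hw, hi]
      rw [hwi, ← hgw i, hg, hf]
      constructor
      · intro h; rw [← eA_inl_inr (E := E) (w := w) (ε := ε) i j hij']; exact h.2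
      · intro h
        refine ⟨?_, by rw [eA_inl_inr (E := E) (w := w) (ε := ε) i j hij']; exact h⟩
        simpa [colA] using Fin.ne_of_lt hij
    · simp only [dif_neg hi]
      rw [hg, hf]
      constructor
      · intro h; rw [← eA_inr_inr (E := E) (w := w) (ε := ε) i j hij']; exact h.2
      · intro h
        refine ⟨?_, by rw [eA_inr_inr (E := E) (w := w) (ε := ε) i j hij']; exact h⟩
        simpa [colA] using Fin.ne_of_lt hij
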